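/- arXiv:1812.05823 — 2 statements merged into one kernel-verified Lean document; each statement's English description precedes it below -/
import Mathlib

section
/- The space V_K admits the direct sum decomposition V_K = span{(x,y)} ⊕ {curl w : w ∈ W_K}; that is, every v ∈ V_K can be written as v = c·(x,y) + curl w with c ∈ ℝ and w ∈ W_K, the constant c is uniquely determined by v, and the only element of span{(x,y)} that is a curl of some w ∈ W_K is the zero vector field. -/
open MvPolynomial

/-- Membership in the shape function space `W_K = P₃ ⊕ span{x⁴, y⁴}`. -/
def memWK (w : MvPolynomial (Fin 2) ℝ) : Prop :=
  ∃ (p : MvPolynomial (Fin 2) ℝ) (c d : ℝ),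
    p.totalDegree ≤ 3 ∧ w = p + C c * X 0 ^ 4 + C d * X 1 ^ 4

/-- Membership in the vector shape function space
`V_K = [P₁]² ⊕ span{curl x³, curl x²y, curl xy², curl y³, curl x⁴, curl y⁴}`,
where `curl φ = (∂φ/∂y, −∂φ/∂x)`. -/
def memVK (v : MvPolynomial (Fin 2) ℝ × MvPolynomial (Fin 2) ℝ) : Prop :=
  ∃ (p q φ : MvPolynomial (Fin 2) ℝ) (c1 c2 c3 c4 c5 c6 : ℝ),
    p.totalDegree ≤ 1 ∧ q.totalDegree ≤ 1 ∧
    φ = C c1 * X 0 ^ 3 + C c2 * X 0 ^ 2 * X 1 + C c3 * X 0 * X 1 ^ 2 +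
        C c4 * X 1 ^ 3 + C c5 * X 0 ^ 4 + C c6 * X 1 ^ 4 ∧
    v.1 = p + pderiv 1 φ ∧ v.2 = q - pderiv 0 φ


lemma fin2_finsupp (m : Fin 2 →₀ ℕ) :
    m = Finsupp.single 0 (m 0) + Finsupp.single 1 (m 1) := by
  ext i; fin_cases i <;> simp

lemma deg_le_one (p : MvPolynomial (Fin 2) ℝ) (hp : p.totalDegree ≤ 1) :
    p = C (coeff 0 p) + C (coeff (Finsupp.single 0 1) p) * X 0
      + C (coeff (Finsupp.single 1 1) p) * X 1 := by
  ext m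
  have hm := fin2_finsupp m
  have hsum : ∑ i ∈ m.support, m i = m 0 + m 1 := by
    rw [Finset.sum_subset (Finset.subset_univ m.support)]
    · simp [Fin.sum_univ_two]
    · intro x _ hx; simpa using Finsupp.notMem_support_iff.mp hx
  rcases Nat.lt_or_ge (m 0 + m 1) 2 with h | h
  · have h0 : m 0 ≤ 1 := by omega
    have h1 : m 1 ≤ 1 := by omega
    interval_cases h0 : m 0 <;> interval_cases h1 : m 1 <;>
    · rw [hm]
      simp_all [coeff_C, coeff_X', Finsupp.single_eq_single_iff, MvPolynomial.coeff_add,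
        coeff_C_mul]
      try rfl
      try (intro hh; exact absurd (Finsupp.single_eq_zero.mp hh.symm) one_ne_zero)
  · have hz : coeff m p = 0 := coeff_eq_zero_of_totalDegree_lt (by omega)
    rw [hz, hm]
    have h0 : (0 : Fin 2 →₀ ℕ) ≠ Finsupp.single 0 (m 0) + Finsupp.single 1 (m 1) := by
      intro hh
      have e0 := DFunLike.congr_fun hh 0
      have e1 := DFunLike.congr_fun hh 1
      simp [Finsupp.single_apply, Finsupp.add_apply] at e0 e1
      omega
    have h1 : (Finsupp.single 0 1 : Fin 2 →₀ ℕ) ≠ Finsupp.single 0 (m 0) + Finsupp.single 1 (m 1) := by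
      intro hh
      have e0 := DFunLike.congr_fun hh 0
      have e1 := DFunLike.congr_fun hh 1
      simp [Finsupp.single_apply, Finsupp.add_apply] at e0 e1
      omega
    have h2 : (Finsupp.single 1 1 : Fin 2 →₀ ℕ) ≠ Finsupp.single 0 (m 0) + Finsupp.single 1 (m 1) := by
      intro hh
      have e0 := DFunLike.congr_fun hh 0
      have e1 := DFunLike.congr_fun hh 1
      simp [Finsupp.single_apply, Finsupp.add_apply] at e0 e1
      omega
    simp [coeff_C, coeff_X', coeff_C_mul, h0, h1, h2]

lemma my_pderiv_comm {σ : Type*} [DecidableEq σ] (i j : σ) (f : MvPolynomial σ ℝ) :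
    pderiv i (pderiv j f) = pderiv j (pderiv i f) := by
  induction f using MvPolynomial.induction_on with
  | C a => simp
  | add p q hp hq => simp [map_add, hp, hq]
  | mul_X p n ih =>
    simp only [pderiv_mul, pderiv_X, map_add, ih, Pi.single_apply]
    split_ifs <;> simp <;> ring

lemma td_add {p q : MvPolynomial (Fin 2) ℝ} {n : ℕ} (h1 : p.totalDegree ≤ n)
    (h2 : q.totalDegree ≤ n) : (p + q).totalDegree ≤ n :=
  le_trans (totalDegree_add _ _) (max_le h1 h2)

lemma td_term (a : ℝ) (i j n : ℕ) (h : i + j ≤ n) :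
    (C a * X 0 ^ i * X 1 ^ j : MvPolynomial (Fin 2) ℝ).totalDegree ≤ n := by
  calc (C a * X 0 ^ i * X 1 ^ j : MvPolynomial (Fin 2) ℝ).totalDegree
      ≤ (C a * X 0 ^ i : MvPolynomial (Fin 2) ℝ).totalDegree
        + (X 1 ^ j : MvPolynomial (Fin 2) ℝ).totalDegree := totalDegree_mul _ _
    _ ≤ ((C a : MvPolynomial (Fin 2) ℝ).totalDegree
        + (X 0 ^ i : MvPolynomial (Fin 2) ℝ).totalDegree)
        + (X 1 ^ j : MvPolynomial (Fin 2) ℝ).totalDegree :=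
        Nat.add_le_add_right (totalDegree_mul _ _) _
    _ ≤ 0 + i + j := by
        simp [totalDegree_C, totalDegree_X_pow]
    _ ≤ n := by omega

lemma uniq_aux (c c' : ℝ) (w w' : MvPolynomial (Fin 2) ℝ)
    (h1 : C c * X 0 + pderiv 1 w = C c' * X 0 + pderiv 1 w')
    (h2 : C c * X 1 - pderiv 0 w = C c' * X 1 - pderiv 0 w') : c = c' := by
  have e1 := congrArg (pderiv 0) h1
  have e2 := congrArg (pderiv 1) h2
  simp only [map_add, map_sub, pderiv_mul, pderiv_X_self, pderiv_C, mul_one,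
    zero_mul, add_zero, zero_add, mul_zero] at e1 e2
  rw [my_pderiv_comm 1 0 w, my_pderiv_comm 1 0 w'] at e2
  have h3 : (C (2 * c) : MvPolynomial (Fin 2) ℝ) = C (2 * c') := by
    rw [C_mul, C_mul, map_ofNat]
    linear_combination e1 + e2
  have := C_injective (Fin 2) ℝ h3
  linarith

set_option maxHeartbeats 1000000 in
/-- the direct sum decomposition
`V_K = span{(x,y)} ⊕ {curl w : w ∈ W_K}`: existence of the decomposition,
uniqueness of the coefficient of `(x,y)`, and triviality of the intersection. -/
theorem stmt3 :
    (∀ v : MvPolynomial (Fin 2) ℝ × MvPolynomial (Fin 2) ℝ, memVK v →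
      ∃ (c : ℝ) (w : MvPolynomial (Fin 2) ℝ), memWK w ∧
        v.1 = C c * X 0 + pderiv 1 w ∧ v.2 = C c * X 1 - pderiv 0 w) ∧
    (∀ (c c' : ℝ) (w w' : MvPolynomial (Fin 2) ℝ), memWK w → memWK w' →
      C c * X 0 + pderiv 1 w = C c' * X 0 + pderiv 1 w' →
      C c * X 1 - pderiv 0 w = C c' * X 1 - pderiv 0 w' →
      c = c') ∧
    (∀ (c : ℝ) (w : MvPolynomial (Fin 2) ℝ), memWK w →
      C c * X 0 = pderiv 1 w → C c * X 1 = -pderiv 0 w → c = 0) := by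
  refine ⟨?_, fun c c' w w' _ _ h1 h2 => uniq_aux c c' w w' h1 h2,
    fun c w hw h1 h2 => uniq_aux c 0 0 w (by simpa using h1) (by simpa using h2)⟩
  rintro v ⟨p, q, φ, c1, c2, c3, c4, c5, c6, hp1, hq1, hφ, hv1, hv2⟩
  have hp' := deg_le_one p hp1
  have hq' := deg_le_one q hq1
  set a0 := coeff 0 p with ha0
  set a1 := coeff (Finsupp.single 0 1) p with ha1
  set a2 := coeff (Finsupp.single 1 1) p with ha2
  set b0 := coeff 0 q with hb0
  set b1 := coeff (Finsupp.single 0 1) q with hb1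
  set b2 := coeff (Finsupp.single 1 1) q with hb2
  set c := (a1 + b2) / 2 with hc
  set e := a1 - c with he
  rw [show a1 = c + e by rw [he]; ring, show a2 = 2 * (a2 / 2) by ring] at hp'
  rw [show b1 = 2 * (b1 / 2) by ring, show b2 = c - e by rw [he, hc]; ring] at hq'
  set h := b1 / 2
  set k := a2 / 2
  refine ⟨c,
    (C (-b0) * X 0 ^ 1 * X 1 ^ 0 + C (-h) * X 0 ^ 2 * X 1 ^ 0 + C a0 * X 0 ^ 0 * X 1 ^ 1
      + C e * X 0 ^ 1 * X 1 ^ 1 + C k * X 0 ^ 0 * X 1 ^ 2 + C c1 * X 0 ^ 3 * X 1 ^ 0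
      + C c2 * X 0 ^ 2 * X 1 ^ 1 + C c3 * X 0 ^ 1 * X 1 ^ 2 + C c4 * X 0 ^ 0 * X 1 ^ 3)
      + C c5 * X 0 ^ 4 + C c6 * X 1 ^ 4,
    ⟨_, c5, c6, ?_, rfl⟩, ?_, ?_⟩
  · repeat first
    | (apply td_term; omega)
    | apply td_add
  · rw [hv1, hφ, hp']
    simp only [map_add, map_sub, map_neg, pderiv_mul, pderiv_pow, pderiv_X_self,
      pderiv_X_of_ne (show (0 : Fin 2) ≠ 1 by decide),
      pderiv_X_of_ne (show (1 : Fin 2) ≠ 0 by decide),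
      pderiv_C, C_add, C_mul, map_ofNat, C_neg]
    push_cast
    ring
  · rw [hv2, hφ, hq']
    simp only [map_add, map_sub, map_neg, pderiv_mul, pderiv_pow, pderiv_X_self,
      pderiv_X_of_ne (show (0 : Fin 2) ≠ 1 by decide),
      pderiv_X_of_ne (show (1 : Fin 2) ≠ 0 by decide),
      pderiv_C, C_add, C_mul, map_ofNat, C_neg]
    push_cast
    ring
end

section
/- Let a, b > 0, let w ∈ W_K, and let g(x,y) = α + βx + γy be an affine polynomial. Set m_b = (1/a)·∫₀ᵃ (∂w/∂y)(x,0) dx and m_t = (1/a)·∫₀ᵃ (∂w/∂y)(x,b) dx. Then ∫₀ᵃ g(x,b)·((∂w/∂y)(x,b) − m_t) dx − ∫₀ᵃ g(x,0)·((∂w/∂y)(x,0) − m_b) dx = (a²β/12)·∫₀ᵃ∫₀ᵇ (∂³w/∂x∂y²)(x,y) dy dx. (This is the identity I₁,K(u,w) = I′₁,K(u,w) for all u with ∂²u/∂y² = g ∈ P₁.) -/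
open MvPolynomial

noncomputable def fs (i j : ℕ) : Fin 2 →₀ ℕ := Finsupp.single 0 i + Finsupp.single 1 j

lemma fs_apply0 (i j : ℕ) : fs i j 0 = i := by simp [fs, Finsupp.single_apply]
lemma fs_apply1 (i j : ℕ) : fs i j 1 = j := by simp [fs, Finsupp.single_apply]

lemma fs_inj {i j k l : ℕ} : fs i j = fs k l ↔ i = k ∧ j = l := by
  constructor
  · intro h
    constructor
    · have h0 := DFunLike.congr_fun h 0
      simpa [fs_apply0] using h0
    · have h1 := DFunLike.congr_fun h 1
      simpa [fs_apply1] using h1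
  · rintro ⟨rfl, rfl⟩; rfl

lemma eq_fs (m : Fin 2 →₀ ℕ) : m = fs (m 0) (m 1) := by
  ext j
  fin_cases j <;> simp [fs, Finsupp.single_apply]

lemma degsum (m : Fin 2 →₀ ℕ) : (m.sum fun _ e => e) = m 0 + m 1 := by
  rw [Finsupp.sum_fintype _ _ (fun _ => rfl)]
  exact Fin.sum_univ_two m

lemma monomial_fs (i j : ℕ) (r : ℝ) :
    (monomial (fs i j) r : MvPolynomial (Fin 2) ℝ) = C r * X 0 ^ i * X 1 ^ j := by
  rw [X_pow_eq_monomial, X_pow_eq_monomial, C_apply, monomial_mul, monomial_mul]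
  simp [fs]


lemma pderiv_totalDegree_le (i : Fin 2) (p : MvPolynomial (Fin 2) ℝ) (n : ℕ)
    (hp : p.totalDegree ≤ n + 1) : (pderiv i p).totalDegree ≤ n := by
  conv_lhs => rw [p.as_sum]
  rw [map_sum]
  refine totalDegree_finsetSum_le fun m hm => ?_
  rw [pderiv_monomial]
  rcases Nat.eq_zero_or_pos (m i) with h0 | h0
  · simp [h0]
  · refine le_trans (totalDegree_monomial_le _ _) ?_
    have hms : m 0 + m 1 ≤ n + 1 := by
      rw [← degsum]; exact le_trans (le_totalDegree hm) hp
    simp only [Function.id_def]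
    rw [degsum]
    have e0 : ((m - Finsupp.single i 1 : Fin 2 →₀ ℕ)) 0 = m 0 - (Finsupp.single i 1 : Fin 2 →₀ ℕ) 0 := Finsupp.tsub_apply _ _ _
    have e1 : ((m - Finsupp.single i 1 : Fin 2 →₀ ℕ)) 1 = m 1 - (Finsupp.single i 1 : Fin 2 →₀ ℕ) 1 := Finsupp.tsub_apply _ _ _
    fin_cases i <;>
      simp only [e0, e1, Finsupp.single_apply] at * <;> simp at * <;> omega
lemma shape2 (q : MvPolynomial (Fin 2) ℝ) (hq : q.totalDegree ≤ 2) :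
    ∃ c00 c10 c01 c20 c11 c02 : ℝ,
      q = C c00 + C c10 * X 0 + C c01 * X 1 + C c20 * X 0 ^ 2
          + C c11 * (X 0 * X 1) + C c02 * X 1 ^ 2 := by
  refine ⟨coeff (fs 0 0) q, coeff (fs 1 0) q, coeff (fs 0 1) q, coeff (fs 2 0) q,
    coeff (fs 1 1) q, coeff (fs 0 2) q, ?_⟩
  have hsub : q.support ⊆ ({fs 0 0, fs 1 0, fs 0 1, fs 2 0, fs 1 1, fs 0 2} :
      Finset (Fin 2 →₀ ℕ)) := by
    intro m hm
    have hms : m 0 + m 1 ≤ 2 := by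
      rw [← degsum]; exact le_trans (le_totalDegree hm) hq
    have hmfs := eq_fs m
    have : (m 0 = 0 ∧ m 1 = 0) ∨ (m 0 = 1 ∧ m 1 = 0) ∨ (m 0 = 0 ∧ m 1 = 1) ∨
        (m 0 = 2 ∧ m 1 = 0) ∨ (m 0 = 1 ∧ m 1 = 1) ∨ (m 0 = 0 ∧ m 1 = 2) := by omega
    simp only [Finset.mem_insert, Finset.mem_singleton]
    rcases this with ⟨h1, h2⟩ | ⟨h1, h2⟩ | ⟨h1, h2⟩ | ⟨h1, h2⟩ | ⟨h1, h2⟩ | ⟨h1, h2⟩ <;>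
      rw [h1, h2] at hmfs <;> tauto
  have hrep : q = ∑ m ∈ ({fs 0 0, fs 1 0, fs 0 1, fs 2 0, fs 1 1, fs 0 2} :
      Finset (Fin 2 →₀ ℕ)), monomial m (coeff m q) := by
    conv_lhs => rw [q.as_sum]
    refine Finset.sum_subset hsub fun m _ hm => ?_
    rw [MvPolynomial.notMem_support_iff.mp hm, map_zero]
  conv_lhs => rw [hrep]
  rw [Finset.sum_insert (by simp [fs_inj]), Finset.sum_insert (by simp [fs_inj]),
    Finset.sum_insert (by simp [fs_inj]), Finset.sum_insert (by simp [fs_inj]),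
    Finset.sum_insert (by simp [fs_inj]), Finset.sum_singleton]
  simp only [monomial_fs]
  ring

lemma integ_cubic (A c0 c1 c2 c3 : ℝ) :
    (∫ x in (0:ℝ)..A, (c0 + c1 * x + c2 * x ^ 2 + c3 * x ^ 3)) =
      c0 * A + c1 * A ^ 2 / 2 + c2 * A ^ 3 / 3 + c3 * A ^ 4 / 4 := by
  have H : ∀ x ∈ Set.uIcc (0:ℝ) A,
      HasDerivAt (fun x : ℝ => c0 * x + c1 * x ^ 2 / 2 + c2 * x ^ 3 / 3 + c3 * x ^ 4 / 4)
        (c0 + c1 * x + c2 * x ^ 2 + c3 * x ^ 3) x := by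
    intro x _
    have h1 : HasDerivAt (fun x : ℝ => c0 * x) c0 x := by
      simpa using (hasDerivAt_id x).const_mul c0
    have h2 := ((hasDerivAt_pow 2 x).const_mul c1).div_const 2
    have h3 := ((hasDerivAt_pow 3 x).const_mul c2).div_const 3
    have h4 := ((hasDerivAt_pow 4 x).const_mul c3).div_const 4
    exact (((h1.add h2).add h3).add h4).congr_deriv (by norm_num; ring)
  rw [intervalIntegral.integral_eq_sub_of_hasDerivAt H
    ((Continuous.intervalIntegrable (by continuity) _ _))]
  norm_num

lemma pderiv_ofNat (i : Fin 2) (n : ℕ) [n.AtLeastTwo] :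
    pderiv i (OfNat.ofNat n : MvPolynomial (Fin 2) ℝ) = 0 := by
  rw [← map_ofNat (C : ℝ →+* MvPolynomial (Fin 2) ℝ) n, pderiv_C]

lemma pderiv_natCast (i : Fin 2) (n : ℕ) :
    pderiv i ((n : ℕ) : MvPolynomial (Fin 2) ℝ) = 0 := by
  rw [← map_natCast (C : ℝ →+* MvPolynomial (Fin 2) ℝ) n, pderiv_C]

/-- the identity `I₁,K(u,w) = I′₁,K(u,w)` for all `u` with
`∂²u/∂y² = g = α + βx + γy ∈ P₁`, for `w ∈ W_K` on `K = [0,a] × [0,b]`. -/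
theorem stmt8 (a b : ℝ) (ha : 0 < a) (hb : 0 < b)
    (w : MvPolynomial (Fin 2) ℝ) (hw : memWK w)
    (α β γ : ℝ)
    (mb mt : ℝ)
    (hmb : mb = (1 / a) * ∫ x in (0:ℝ)..a, eval ![x, 0] (pderiv 1 w))
    (hmt : mt = (1 / a) * ∫ x in (0:ℝ)..a, eval ![x, b] (pderiv 1 w)) :
    (∫ x in (0:ℝ)..a, (α + β * x + γ * b) * (eval ![x, b] (pderiv 1 w) - mt)) -
      (∫ x in (0:ℝ)..a, (α + β * x + γ * 0) * (eval ![x, 0] (pderiv 1 w) - mb)) =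
    (a ^ 2 * β / 12) *
      ∫ x in (0:ℝ)..a, ∫ y in (0:ℝ)..b,
        eval ![x, y] (pderiv 0 (pderiv 1 (pderiv 1 w))) := by
  obtain ⟨p, c, d, hdeg, rfl⟩ := hw
  obtain ⟨c00, c10, c01, c20, c11, c02, hq⟩ :=
    shape2 (pderiv 1 p) (pderiv_totalDegree_le 1 p 2 hdeg)
  set W : MvPolynomial (Fin 2) ℝ := p + C c * X 0 ^ 4 + C d * X 1 ^ 4 with hWdef
  have hD1 : pderiv 1 W =
      C c00 + C c10 * X 0 + C c01 * X 1 + C c20 * (X 0 * X 0)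
        + C c11 * (X 0 * X 1) + C c02 * (X 1 * X 1) + C (4 * d) * (X 1 * (X 1 * X 1)) := by
    rw [hWdef, map_add, map_add, pderiv_C_mul, pderiv_C_mul, hq, pderiv_pow, pderiv_pow,
      pderiv_X_self, pderiv_X_of_ne (show (0:Fin 2) ≠ 1 by decide)]
    simp [C_mul, map_ofNat]
    ring
  have hD3 : pderiv 0 (pderiv 1 (pderiv 1 W)) = C c11 := by
    rw [hD1]
    simp [pderiv_mul, pderiv_C_mul, pderiv_X_self, pderiv_C,
      pderiv_X_of_ne (show (0:Fin 2) ≠ 1 by decide),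
      pderiv_X_of_ne (show (1:Fin 2) ≠ 0 by decide)]
  have hEb : ∀ x y : ℝ, eval ![x, y] (pderiv 1 W) =
      c00 + c10 * x + c01 * y + c20 * x ^ 2 + c11 * (x * y) + c02 * y ^ 2
        + d * (4 * y ^ 3) := by
    intro x y
    rw [hD1]
    simp
    ring
  have hE3 : ∀ x y : ℝ, eval ![x, y] (pderiv 0 (pderiv 1 (pderiv 1 W))) = c11 := by
    intro x y
    rw [hD3]
    simp
  have hIb : (∫ x in (0:ℝ)..a, eval ![x, 0] (pderiv 1 W)) =
      c00 * a + c10 * a ^ 2 / 2 + c20 * a ^ 3 / 3 := by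
    rw [intervalIntegral.integral_congr
      (g := fun x => c00 + c10 * x + c20 * x ^ 2 + 0 * x ^ 3)
      (fun x _ => by
        show eval ![x, 0] (pderiv 1 W) = _
        rw [hEb]; ring), integ_cubic]
    ring
  have hIt : (∫ x in (0:ℝ)..a, eval ![x, b] (pderiv 1 W)) =
      (c00 + c01 * b + c02 * b ^ 2 + d * (4 * b ^ 3)) * a
        + (c10 + c11 * b) * a ^ 2 / 2 + c20 * a ^ 3 / 3 := by
    rw [intervalIntegral.integral_congr
      (g := fun x => (c00 + c01 * b + c02 * b ^ 2 + d * (4 * b ^ 3))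
        + (c10 + c11 * b) * x + c20 * x ^ 2 + 0 * x ^ 3)
      (fun x _ => by
        show eval ![x, b] (pderiv 1 W) = _
        rw [hEb]; ring), integ_cubic]
    ring
  have hJt : (∫ x in (0:ℝ)..a, (α + β * x + γ * b) * (eval ![x, b] (pderiv 1 W) - mt)) =
      ((α + γ * b) * ((c00 + c01 * b + c02 * b ^ 2 + d * (4 * b ^ 3)) - mt)) * a
        + (β * ((c00 + c01 * b + c02 * b ^ 2 + d * (4 * b ^ 3)) - mt)
            + (α + γ * b) * (c10 + c11 * b)) * a ^ 2 / 2
        + (β * (c10 + c11 * b) + (α + γ * b) * c20) * a ^ 3 / 3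
        + (β * c20) * a ^ 4 / 4 := by
    rw [intervalIntegral.integral_congr
      (g := fun x => ((α + γ * b) * ((c00 + c01 * b + c02 * b ^ 2 + d * (4 * b ^ 3)) - mt))
        + (β * ((c00 + c01 * b + c02 * b ^ 2 + d * (4 * b ^ 3)) - mt)
            + (α + γ * b) * (c10 + c11 * b)) * x
        + (β * (c10 + c11 * b) + (α + γ * b) * c20) * x ^ 2
        + (β * c20) * x ^ 3)
      (fun x _ => by
        show (α + β * x + γ * b) * (eval ![x, b] (pderiv 1 W) - mt) = _
        rw [hEb]; ring), integ_cubic]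
  have hJb : (∫ x in (0:ℝ)..a, (α + β * x + γ * 0) * (eval ![x, 0] (pderiv 1 W) - mb)) =
      (α * (c00 - mb)) * a + (β * (c00 - mb) + α * c10) * a ^ 2 / 2
        + (β * c10 + α * c20) * a ^ 3 / 3 + (β * c20) * a ^ 4 / 4 := by
    rw [intervalIntegral.integral_congr
      (g := fun x => (α * (c00 - mb)) + (β * (c00 - mb) + α * c10) * x
        + (β * c10 + α * c20) * x ^ 2 + (β * c20) * x ^ 3)
      (fun x _ => by
        show (α + β * x + γ * 0) * (eval ![x, 0] (pderiv 1 W) - mb) = _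
        rw [hEb]; ring), integ_cubic]
  have hinner : ∀ x : ℝ,
      (∫ y in (0:ℝ)..b, eval ![x, y] (pderiv 0 (pderiv 1 (pderiv 1 W)))) = c11 * b := by
    intro x
    rw [hD3]
    simp [mul_comm]
  have hRHS : (∫ x in (0:ℝ)..a, ∫ y in (0:ℝ)..b,
      eval ![x, y] (pderiv 0 (pderiv 1 (pderiv 1 W)))) = c11 * b * a := by
    rw [intervalIntegral.integral_congr (g := fun _ => c11 * b) (fun x _ => hinner x)]
    simp
    ring
  rw [hJt, hJb, hRHS, hmb, hmt, hIb, hIt]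
  field_simp
  ring
end
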